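/- For every positive integer n, every 2-edge-coloring c of the complete graph on [n] has a twin of size at least n/4 − 1; in particular F_2(n) ≥ n/4 − O(1). -/

import Mathlib

/-- `I, J` form a twin with respect to the edge-coloring `c` of the complete graph on `[n]`:
they are disjoint, have the same size, and consecutive pairs get matching colors. -/
def IsTwin {n r : ℕ} (c : Sym2 (Fin n) → Fin r) (I J : Finset (Fin n)) : Prop :=
  Disjoint I J ∧ I.card = J.card ∧
    ∀ (t : ℕ) (hI : t + 1 < I.card) (hJ : t + 1 < J.card),
      c s(I.orderEmbOfFin rfl ⟨t, Nat.lt_of_succ_lt hI⟩, I.orderEmbOfFin rfl ⟨t + 1, hI⟩) =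
      c s(J.orderEmbOfFin rfl ⟨t, Nat.lt_of_succ_lt hJ⟩, J.orderEmbOfFin rfl ⟨t + 1, hJ⟩)

/-- `f(c)`: the maximum size of a twin with respect to `c`. -/
noncomputable def maxTwinSize {n r : ℕ} (c : Sym2 (Fin n) → Fin r) : ℕ :=
  sSup {ℓ : ℕ | ∃ I J : Finset (Fin n), IsTwin c I J ∧ I.card = ℓ}

/-- `F_r(n)`: the minimum of `f(c)` over all `r`-edge-colorings `c` of `K_n`. -/
noncomputable def Fgen (n r : ℕ) : ℕ :=
  sInf {m : ℕ | ∃ c : Sym2 (Fin n) → Fin r, maxTwinSize c = m}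


namespace TwinProofAux




def GoodB (M : Fin 4 → Fin 3 → Fin 2) (x y : Fin 4) : Prop :=
  ∃ u v : Fin 3, u ≠ v ∧ M x u = M y v

lemma fin2_resolve : ∀ a b c : Fin 2, c ≠ a → c ≠ b → a = b := by decide

lemma fin2_cover : ∀ a b c : Fin 2, a ≠ b → c = a ∨ c = b := by decide

lemma third_exists : ∀ u u' : Fin 3, u ≠ u' → ∃ w : Fin 3, w ≠ u ∧ w ≠ u' := by decide

lemma O2 {M : Fin 4 → Fin 3 → Fin 2} {x y : Fin 4} (h : ¬ GoodB M x y) :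
    (∀ u, M x u = M x 0) ∧ (∀ v, M y v = M y 0) ∧ M x 0 ≠ M y 0 := by
  have h' : ∀ u v : Fin 3, u ≠ v → M x u ≠ M y v := by
    intro u v huv heq; exact h ⟨u, v, huv, heq⟩
  have cx : ∀ u u' : Fin 3, M x u = M x u' := by
    intro u u'
    by_cases huu : u = u'
    · rw [huu]
    obtain ⟨w, hw1, hw2⟩ := third_exists u u' huu
    exact fin2_resolve _ _ (M y w) (fun he => h' u w (Ne.symm hw1) he.symm)
      (fun he => h' u' w (Ne.symm hw2) he.symm)
  have cy : ∀ v v' : Fin 3, M y v = M y v' := by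
    intro v v'
    by_cases hvv : v = v'
    · rw [hvv]
    obtain ⟨w, hw1, hw2⟩ := third_exists v v' hvv
    exact fin2_resolve _ _ (M x w) (fun he => h' w v hw1 he)
      (fun he => h' w v' hw2 he)
  refine ⟨fun u => cx u 0, fun v => cy v 0, ?_⟩
  have h01 := h' 0 1 (by decide)
  rw [cy 1 0] at h01
  exact h01

lemma L1 (M : Fin 4 → Fin 3 → Fin 2) :
    (∃ x y z : Fin 4, x < y ∧ y < z ∧ GoodB M x y ∧ GoodB M x z ∧ GoodB M y z) ∨
    (∀ γ : Fin 2, ∃ a b : Fin 4, a < b ∧ (∀ u, M a u = γ) ∧ (∀ u, M b u = γ)) := by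
  by_cases h2 : ∀ γ : Fin 2, ∃ a b : Fin 4, a < b ∧ (∀ u, M a u = γ) ∧ (∀ u, M b u = γ)
  · exact Or.inr h2
  left
  push_neg at h2
  obtain ⟨γ, hγ⟩ := h2
  have huniq : ∀ a b : Fin 4, a ≠ b → (∀ u, M a u = γ) → (∀ u, M b u = γ) → False := by
    intro a b hne ca cb
    rcases lt_or_gt_of_ne hne with h | h
    · obtain ⟨u, hu⟩ := hγ a b h ca; exact hu (cb u)
    · obtain ⟨u, hu⟩ := hγ b a h cb; exact hu (ca u)
  have key : ∀ x y : Fin 4, x ≠ y → ¬ (∀ u, M x u = γ) → ¬ (∀ u, M y u = γ) → GoodB M x y := by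
    intro x y _ hx hy
    by_contra hng
    obtain ⟨cx, cy, hne⟩ := O2 hng
    rcases fin2_cover (M x 0) (M y 0) γ hne with hg | hg
    · exact hx (fun u => (cx u).trans hg.symm)
    · exact hy (fun u => (cy u).trans hg.symm)
  by_cases hw : ∃ w : Fin 4, ∀ u, M w u = γ
  · obtain ⟨w, hwc⟩ := hw
    have hoth : ∀ x : Fin 4, x ≠ w → ¬ (∀ u, M x u = γ) := fun x hx hc => huniq x w hx hc hwc
    fin_cases w
    · exact ⟨1, 2, 3, by decide, by decide,
        key 1 2 (by decide) (hoth 1 (by decide)) (hoth 2 (by decide)),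
        key 1 3 (by decide) (hoth 1 (by decide)) (hoth 3 (by decide)),
        key 2 3 (by decide) (hoth 2 (by decide)) (hoth 3 (by decide))⟩
    · exact ⟨0, 2, 3, by decide, by decide,
        key 0 2 (by decide) (hoth 0 (by decide)) (hoth 2 (by decide)),
        key 0 3 (by decide) (hoth 0 (by decide)) (hoth 3 (by decide)),
        key 2 3 (by decide) (hoth 2 (by decide)) (hoth 3 (by decide))⟩
    · exact ⟨0, 1, 3, by decide, by decide,
        key 0 1 (by decide) (hoth 0 (by decide)) (hoth 1 (by decide)),
        key 0 3 (by decide) (hoth 0 (by decide)) (hoth 3 (by decide)),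
        key 1 3 (by decide) (hoth 1 (by decide)) (hoth 3 (by decide))⟩
    · exact ⟨0, 1, 2, by decide, by decide,
        key 0 1 (by decide) (hoth 0 (by decide)) (hoth 1 (by decide)),
        key 0 2 (by decide) (hoth 0 (by decide)) (hoth 2 (by decide)),
        key 1 2 (by decide) (hoth 1 (by decide)) (hoth 2 (by decide))⟩
  · have hall : ∀ x : Fin 4, ¬ (∀ u, M x u = γ) := fun x hx => hw ⟨x, hx⟩
    exact ⟨0, 1, 2, by decide, by decide,
      key 0 1 (by decide) (hall 0) (hall 1),
      key 0 2 (by decide) (hall 0) (hall 2),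
      key 1 2 (by decide) (hall 1) (hall 2)⟩



variable {n : ℕ}

/-- A pair-chain: two disjoint strictly increasing sequences of length `k+1`
with matching consecutive colors, anchored at `(a, b)`, all vertices with value `≥ s`,
and all non-anchor vertices avoiding the finite set `A`. -/
structure Chain (c : Sym2 (Fin n) → Fin 2) (s k : ℕ) (a b : Fin n) (A : Finset (Fin n)) where
  f : Fin (k+1) → Fin n
  g : Fin (k+1) → Fin n
  monoF : StrictMono f
  monoG : StrictMono g
  disj : ∀ i j, f i ≠ g j
  col : ∀ i : Fin k, c s(f i.castSucc, f i.succ) = c s(g i.castSucc, g i.succ)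
  aF : f 0 = a
  aG : g 0 = b
  lb : ∀ i, s ≤ (f i : ℕ) ∧ s ≤ (g i : ℕ)
  avoid : ∀ i, i ≠ 0 → f i ∉ A ∧ g i ∉ A

def Chain.swap {c : Sym2 (Fin n) → Fin 2} {s k : ℕ} {a b : Fin n} {A : Finset (Fin n)}
    (D : Chain c s k a b A) : Chain c s k b a A where
  f := D.g
  g := D.f
  monoF := D.monoG
  monoG := D.monoF
  disj := fun i j h => D.disj j i h.symm
  col := fun i => (D.col i).symm
  aF := D.aG
  aG := D.aF
  lb := fun i => ⟨(D.lb i).2, (D.lb i).1⟩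
  avoid := fun i hi => ⟨(D.avoid i hi).2, (D.avoid i hi).1⟩

def Chain.prepend {c : Sym2 (Fin n) → Fin 2} {s' k : ℕ} {a' b' : Fin n} {A' : Finset (Fin n)}
    (D : Chain c s' k a' b' A') (s : ℕ) (a b : Fin n) (A : Finset (Fin n))
    (hab : a ≠ b) (haa' : a < a') (hbb' : b < b')
    (hcol : c s(a, a') = c s(b, b'))
    (hsa : s ≤ (a : ℕ)) (hsb : s ≤ (b : ℕ)) (hss : s ≤ s')
    (hag : ∀ j, a ≠ D.g j) (hbf : ∀ j, b ≠ D.f j)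
    (hAf : ∀ i, D.f i ∉ A) (hAg : ∀ i, D.g i ∉ A) :
    Chain c s (k+1) a b A where
  f := Fin.cons a D.f
  g := Fin.cons b D.g
  monoF := by
    rw [Fin.strictMono_iff_lt_succ]
    intro i
    induction i using Fin.cases with
    | zero =>
        simp only [Fin.castSucc_zero, Fin.cons_zero, Fin.cons_succ, D.aF]
        exact haa'
    | succ j =>
        rw [← Fin.succ_castSucc, Fin.cons_succ, Fin.cons_succ]
        exact D.monoF Fin.castSucc_lt_succ
  monoG := by
    rw [Fin.strictMono_iff_lt_succ]
    intro i
    induction i using Fin.cases with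
    | zero =>
        simp only [Fin.castSucc_zero, Fin.cons_zero, Fin.cons_succ, D.aG]
        exact hbb'
    | succ j =>
        rw [← Fin.succ_castSucc, Fin.cons_succ, Fin.cons_succ]
        exact D.monoG Fin.castSucc_lt_succ
  disj := by
    intro i j
    induction i using Fin.cases with
    | zero =>
        induction j using Fin.cases with
        | zero => simpa using hab
        | succ j' => rw [Fin.cons_zero, Fin.cons_succ]; exact hag j'
    | succ i' =>
        induction j using Fin.cases with
        | zero => rw [Fin.cons_zero, Fin.cons_succ]; exact fun h => hbf i' h.symm
        | succ j' => rw [Fin.cons_succ, Fin.cons_succ]; exact D.disj i' j'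
  col := by
    intro i
    induction i using Fin.cases with
    | zero =>
        simp only [Fin.castSucc_zero, Fin.cons_zero, Fin.cons_succ, D.aF, D.aG]
        exact hcol
    | succ j =>
        rw [← Fin.succ_castSucc, Fin.cons_succ, Fin.cons_succ, Fin.cons_succ, Fin.cons_succ]
        exact D.col j
  aF := Fin.cons_zero _ _
  aG := Fin.cons_zero _ _
  lb := by
    intro i
    induction i using Fin.cases with
    | zero => simpa using ⟨hsa, hsb⟩
    | succ j => rw [Fin.cons_succ, Fin.cons_succ]; exact ⟨hss.trans (D.lb j).1, hss.trans (D.lb j).2⟩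
  avoid := by
    intro i hi
    induction i using Fin.cases with
    | zero => exact absurd rfl hi
    | succ j => rw [Fin.cons_succ, Fin.cons_succ]; exact ⟨hAf j, hAg j⟩

/-- The inductive invariant: a triangle of vertices, each pair anchoring a chain. -/
def Inv (c : Sym2 (Fin n) → Fin 2) (s k : ℕ) : Prop :=
  ∃ v1 v2 v3 : Fin n, v1 < v2 ∧ v2 < v3 ∧ s ≤ (v1 : ℕ) ∧
    Nonempty (Chain c s k v1 v2 {v1, v2, v3}) ∧
    Nonempty (Chain c s k v1 v3 {v1, v2, v3}) ∧
    Nonempty (Chain c s k v2 v3 {v1, v2, v3})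

lemma base (c : Sym2 (Fin n) → Fin 2) (hn : 3 ≤ n) : Inv c (n - 3) 0 := by
  have h1 : n - 3 < n := by omega
  have h2 : n - 2 < n := by omega
  have h3 : n - 1 < n := by omega
  refine ⟨⟨n-3, h1⟩, ⟨n-2, h2⟩, ⟨n-1, h3⟩, ?_, ?_, ?_, ?_, ?_, ?_⟩
  · simp [Fin.lt_def]; omega
  · simp [Fin.lt_def]; omega
  · simp
  all_goals {
    refine ⟨⟨fun _ => _, fun _ => _, ?_, ?_, ?_, ?_, rfl, rfl, ?_, ?_⟩⟩
    · intro i j hij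
      have hi := i.isLt; have hj := j.isLt
      have : i = j := by ext; omega
      exact absurd this (ne_of_lt hij)
    · intro i j hij
      have hi := i.isLt; have hj := j.isLt
      have : i = j := by ext; omega
      exact absurd this (ne_of_lt hij)
    · intro i j; simp [Fin.ext_iff]; omega
    · intro i; exact i.elim0
    · intro i; constructor <;> simp <;> omega
    · intro i hi
      have hi2 := i.isLt
      have : i = 0 := by ext; omega
      exact absurd this hi
  }



def trip {n : ℕ} (v1 v2 v3 : Fin n) : Fin 3 → Fin n := fun u =>
  match u with
  | ⟨0, _⟩ => v1
  | ⟨1, _⟩ => v2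
  | ⟨2, _⟩ => v3

def lef {n : ℕ} (s : ℕ) (hs : s + 4 ≤ n) : Fin 4 → Fin n :=
  fun i => ⟨s + i, by have := i.isLt; omega⟩

lemma step (c : Sym2 (Fin n) → Fin 2) (s k : ℕ) (h : Inv c (s+4) k) : Inv c s (k+1) := by
  obtain ⟨v1, v2, v3, h12, h23, hv1, ⟨D12⟩, ⟨D13⟩, ⟨D23⟩⟩ := h
  have h12' : (v1:ℕ) < (v2:ℕ) := h12
  have h23' : (v2:ℕ) < (v3:ℕ) := h23
  have hv3n : (v3:ℕ) < n := v3.isLt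
  have hsn : s + 4 ≤ n := by omega
  set Z := trip v1 v2 v3 with hZdef
  set L := lef (n := n) s hsn with hLdef
  have hLval : ∀ i : Fin 4, (L i : ℕ) = s + i := fun i => rfl
  have hZlb : ∀ u : Fin 3, s + 4 ≤ (Z u : ℕ) := by
    intro u
    fin_cases u
    · exact hv1
    · show s + 4 ≤ (v2:ℕ); omega
    · show s + 4 ≤ (v3:ℕ); omega
  have hZn : ∀ u : Fin 3, (Z u : ℕ) < n := fun u => (Z u).isLt
  have chZ : ∀ u v : Fin 3, u ≠ v → Nonempty (Chain c (s+4) k (Z u) (Z v) {v1, v2, v3}) := by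
    intro u v huv
    fin_cases u <;> fin_cases v
    · exact absurd rfl huv
    · exact ⟨D12⟩
    · exact ⟨D13⟩
    · exact ⟨D12.swap⟩
    · exact absurd rfl huv
    · exact ⟨D23⟩
    · exact ⟨D13.swap⟩
    · exact ⟨D23.swap⟩
    · exact absurd rfl huv
  have mkPair : ∀ x y : Fin 4, x < y → GoodB (fun i u => c s(L i, Z u)) x y →
      ∀ A : Finset (Fin n), (∀ w ∈ A, (w:ℕ) < s + 4) →
      Nonempty (Chain c s (k+1) (L x) (L y) A) := by
    intro x y hxy hG A hA
    obtain ⟨u, v, huv, heq⟩ := hG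
    obtain ⟨D⟩ := chZ u v huv
    have hx4 := x.isLt
    have hy4 := y.isLt
    have hxy' : (x:ℕ) < (y:ℕ) := hxy
    refine ⟨D.prepend s (L x) (L y) A ?_ ?_ ?_ heq ?_ ?_ (by omega) ?_ ?_ ?_ ?_⟩
    · exact Fin.ne_of_val_ne (by rw [hLval, hLval]; omega)
    · exact Fin.lt_def.mpr (by rw [hLval]; have := hZlb u; omega)
    · exact Fin.lt_def.mpr (by rw [hLval]; have := hZlb v; omega)
    · show s ≤ s + (x:ℕ); omega
    · show s ≤ s + (y:ℕ); omega
    · intro j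
      have := (D.lb j).2
      exact Fin.ne_of_val_ne (by rw [hLval]; omega)
    · intro j
      have := (D.lb j).1
      exact Fin.ne_of_val_ne (by rw [hLval]; omega)
    · intro i hmem
      have h1 := hA _ hmem
      have h2 := (D.lb i).1
      omega
    · intro i hmem
      have h1 := hA _ hmem
      have h2 := (D.lb i).2
      omega
  rcases L1 (fun i u => c s(L i, Z u)) with ⟨x, y, z, hxy, hyz, Gxy, Gxz, Gyz⟩ | Hc
  · -- three pairwise-good lefts
    have hAlef : ∀ w ∈ ({L x, L y, L z} : Finset (Fin n)), (w:ℕ) < s + 4 := by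
      intro w hw
      have hx := x.isLt; have hy := y.isLt; have hz := z.isLt
      simp only [Finset.mem_insert, Finset.mem_singleton] at hw
      rcases hw with rfl | rfl | rfl <;> (rw [hLval]; omega)
    refine ⟨L x, L y, L z, ?_, ?_, ?_, ?_, ?_, ?_⟩
    · exact Fin.lt_def.mpr (by rw [hLval, hLval]; exact Nat.add_lt_add_left hxy _)
    · exact Fin.lt_def.mpr (by rw [hLval, hLval]; exact Nat.add_lt_add_left hyz _)
    · show s ≤ s + (x:ℕ); omega
    · exact mkPair x y hxy Gxy _ hAlef
    · exact mkPair x z (hxy.trans hyz) Gxz _ hAlef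
    · exact mkPair y z hyz Gyz _ hAlef
  · -- 2+2 constant case
    obtain ⟨w1, w2, hw, hc1, hc2⟩ := Hc (c s(v1, v2))
    have hw1lt := w1.isLt
    have hw2lt := w2.isLt
    have hw' : (w1:ℕ) < (w2:ℕ) := hw
    have hf23 : ∀ i, D23.f i ≠ v1 := by
      intro i
      by_cases hi : i = 0
      · rw [hi, D23.aF]
        exact Fin.ne_of_val_ne (by omega)
      · intro hh
        exact (D23.avoid i hi).1 (by rw [hh]; simp)
    have hg23 : ∀ i, D23.g i ≠ v1 := by
      intro i
      by_cases hi : i = 0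
      · rw [hi, D23.aG]
        exact Fin.ne_of_val_ne (by omega)
      · intro hh
        exact (D23.avoid i hi).2 (by rw [hh]; simp)
    have hnotmem : ∀ (w : Fin n), (s+4 ≤ (w:ℕ)) → w ≠ v1 →
        w ∉ ({L w1, L w2, v1} : Finset (Fin n)) := by
      intro w hwlb hwne hmem
      simp only [Finset.mem_insert, Finset.mem_singleton] at hmem
      rcases hmem with rfl | rfl | rfl
      · rw [hLval] at hwlb; omega
      · rw [hLval] at hwlb; omega
      · exact hwne rfl
    refine ⟨L w1, L w2, v1, ?_, ?_, ?_, ?_, ?_, ?_⟩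
    · exact Fin.lt_def.mpr (by rw [hLval, hLval]; exact Nat.add_lt_add_left hw _)
    · exact Fin.lt_def.mpr (by rw [hLval]; omega)
    · show s ≤ s + (w1:ℕ); omega
    · -- chain for (L w1, L w2), prepended to D23 (anchors v2, v3)
      refine ⟨D23.prepend s (L w1) (L w2) _ ?_ ?_ ?_ ?_ ?_ ?_ (by omega) ?_ ?_ ?_ ?_⟩
      · exact Fin.ne_of_val_ne (by rw [hLval, hLval]; omega)
      · exact Fin.lt_def.mpr (by rw [hLval]; omega)
      · exact Fin.lt_def.mpr (by rw [hLval]; omega)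
      · exact (hc1 1).trans (hc2 2).symm
      · show s ≤ s + (w1:ℕ); omega
      · show s ≤ s + (w2:ℕ); omega
      · intro j
        have := (D23.lb j).2
        exact Fin.ne_of_val_ne (by rw [hLval]; omega)
      · intro j
        have := (D23.lb j).1
        exact Fin.ne_of_val_ne (by rw [hLval]; omega)
      · intro i
        exact hnotmem _ (D23.lb i).1 (hf23 i)
      · intro i
        exact hnotmem _ (D23.lb i).2 (hg23 i)
    · -- chain for (L w1, v1): prepend to swapped D23 (anchors v3, v2)
      refine ⟨(D23.swap).prepend s (L w1) v1 _ ?_ ?_ ?_ ?_ ?_ ?_ (by omega) ?_ ?_ ?_ ?_⟩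
      · exact Fin.ne_of_val_ne (by rw [hLval]; omega)
      · exact Fin.lt_def.mpr (by rw [hLval]; omega)
      · exact h12
      · exact hc1 2
      · show s ≤ s + (w1:ℕ); omega
      · omega
      · intro j
        have := ((D23.swap).lb j).2
        exact Fin.ne_of_val_ne (by rw [hLval]; omega)
      · intro j
        exact fun hh => hg23 j hh.symm
      · intro i
        exact hnotmem _ ((D23.swap).lb i).1 (hg23 i)
      · intro i
        exact hnotmem _ ((D23.swap).lb i).2 (hf23 i)
    · -- chain for (L w2, v1)
      refine ⟨(D23.swap).prepend s (L w2) v1 _ ?_ ?_ ?_ ?_ ?_ ?_ (by omega) ?_ ?_ ?_ ?_⟩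
      · exact Fin.ne_of_val_ne (by rw [hLval]; omega)
      · exact Fin.lt_def.mpr (by rw [hLval]; omega)
      · exact h12'
      · exact hc2 2
      · show s ≤ s + (w2:ℕ); omega
      · omega
      · intro j
        have := ((D23.swap).lb j).2
        exact Fin.ne_of_val_ne (by rw [hLval]; omega)
      · intro j
        exact fun hh => hg23 j hh.symm
      · intro i
        exact hnotmem _ ((D23.swap).lb i).1 (hg23 i)
      · intro i
        exact hnotmem _ ((D23.swap).lb i).2 (hf23 i)


lemma iterate (c : Sym2 (Fin n) → Fin 2) (hn : 3 ≤ n) :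
    ∀ k : ℕ, 4*k + 3 ≤ n → Inv c (n - 3 - 4*k) k := by
  intro k
  induction k with
  | zero => intro _; simpa using base c hn
  | succ k ih =>
      intro hk
      have h1 : 4*k + 3 ≤ n := by omega
      have h2 : n - 3 - 4*k = (n - 3 - 4*(k+1)) + 4 := by omega
      have h3 := ih h1
      rw [h2] at h3
      exact step c _ k h3

lemma chain_twin {c : Sym2 (Fin n) → Fin 2} {s k : ℕ} {a b : Fin n} {A : Finset (Fin n)}
    (D : Chain c s k a b A) : ∃ I J : Finset (Fin n), IsTwin c I J ∧ I.card = k + 1 := by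
  classical
  have hcardI : (Finset.image D.f Finset.univ).card = k+1 := by
    rw [Finset.card_image_of_injective _ D.monoF.injective, Finset.card_univ, Fintype.card_fin]
  have hcardJ : (Finset.image D.g Finset.univ).card = k+1 := by
    rw [Finset.card_image_of_injective _ D.monoG.injective, Finset.card_univ, Fintype.card_fin]
  have hembI : ∀ x : Fin (Finset.image D.f Finset.univ).card,
      (Finset.image D.f Finset.univ).orderEmbOfFin rfl x = D.f (Fin.cast hcardI x) := by
    have hmono : StrictMono (fun x : Fin (Finset.image D.f Finset.univ).card =>
        D.f (Fin.cast hcardI x)) := by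
      intro i j hij
      exact D.monoF (Fin.lt_def.mpr (by rw [Fin.coe_cast, Fin.coe_cast]; exact hij))
    have hmem : ∀ x, D.f (Fin.cast hcardI x) ∈ Finset.image D.f Finset.univ := by
      intro x; exact Finset.mem_image_of_mem _ (Finset.mem_univ _)
    have h := Finset.orderEmbOfFin_unique (s := Finset.image D.f Finset.univ) rfl hmem hmono
    exact fun x => (congrFun h x).symm
  have hembJ : ∀ x : Fin (Finset.image D.g Finset.univ).card,
      (Finset.image D.g Finset.univ).orderEmbOfFin rfl x = D.g (Fin.cast hcardJ x) := by
    have hmono : StrictMono (fun x : Fin (Finset.image D.g Finset.univ).card =>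
        D.g (Fin.cast hcardJ x)) := by
      intro i j hij
      exact D.monoG (Fin.lt_def.mpr (by rw [Fin.coe_cast, Fin.coe_cast]; exact hij))
    have hmem : ∀ x, D.g (Fin.cast hcardJ x) ∈ Finset.image D.g Finset.univ := by
      intro x; exact Finset.mem_image_of_mem _ (Finset.mem_univ _)
    have h := Finset.orderEmbOfFin_unique (s := Finset.image D.g Finset.univ) rfl hmem hmono
    exact fun x => (congrFun h x).symm
  refine ⟨Finset.image D.f Finset.univ, Finset.image D.g Finset.univ, ⟨?_, ?_, ?_⟩, hcardI⟩
  · rw [Finset.disjoint_left]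
    intro a haI haJ
    obtain ⟨i, _, hi⟩ := Finset.mem_image.mp haI
    obtain ⟨j, _, hj⟩ := Finset.mem_image.mp haJ
    exact D.disj i j (hi.trans hj.symm)
  · rw [hcardI, hcardJ]
  · intro t hI hJ
    have ht1 : t + 1 < k + 1 := by rwa [hcardI] at hI
    have ht : t < k := by omega
    rw [hembI, hembI, hembJ, hembJ]
    exact D.col ⟨t, ht⟩

lemma main_bound (c : Sym2 (Fin n) → Fin 2) :
    ∃ I J : Finset (Fin n), IsTwin c I J ∧ (n : ℝ) / 4 - 1 ≤ (I.card : ℝ) := by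
  by_cases h3 : 3 ≤ n
  · have hK : 4 * ((n-3)/4) + 3 ≤ n := by
      have := Nat.div_mul_le_self (n-3) 4
      omega
    obtain ⟨v1, v2, v3, _, _, _, ⟨D⟩, _, _⟩ := iterate c h3 ((n-3)/4) hK
    obtain ⟨I, J, htwin, hcard⟩ := chain_twin D
    refine ⟨I, J, htwin, ?_⟩
    have hmod : (n - 3) % 4 < 4 := Nat.mod_lt _ (by norm_num)
    have hdm := Nat.div_add_mod (n-3) 4
    have hn6 : n ≤ 4 * ((n-3)/4) + 6 := by omega
    have hn6' : (n:ℝ) ≤ 4 * ((((n-3)/4 : ℕ)):ℝ) + 6 := by exact_mod_cast hn6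
    rw [hcard]
    push_cast
    linarith
  · refine ⟨∅, ∅, ⟨Finset.disjoint_empty_left _, rfl, ?_⟩, ?_⟩
    · intro t hI _
      exact absurd hI (by simp)
    · simp only [Finset.card_empty, Nat.cast_zero]
      have hn2 : n ≤ 2 := by omega
      have hn2' : (n:ℝ) ≤ 2 := by exact_mod_cast hn2
      linarith

end TwinProofAux

/-- Every 2-edge-coloring of the complete graph on `[n]` has a twin of size
at least `n/4 − 1`; in particular `F_2(n) ≥ n/4 − O(1)`. -/
theorem twin_lower_bound_two_colors (n : ℕ) (hn : 1 ≤ n) :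
    (∀ c : Sym2 (Fin n) → Fin 2,
      ∃ I J : Finset (Fin n), IsTwin c I J ∧ (n : ℝ) / 4 - 1 ≤ (I.card : ℝ)) ∧
    (n : ℝ) / 4 - 1 ≤ (Fgen n 2 : ℝ) := by
  constructor
  · exact TwinProofAux.main_bound
  · have hne : {m : ℕ | ∃ c : Sym2 (Fin n) → Fin 2, maxTwinSize c = m}.Nonempty :=
      ⟨maxTwinSize (fun _ => 0), ⟨_, rfl⟩⟩
    obtain ⟨c0, hc0⟩ := Nat.sInf_mem hne
    obtain ⟨I, J, htwin, hbound⟩ := TwinProofAux.main_bound c0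
    have hIle : I.card ≤ maxTwinSize c0 := by
      apply le_csSup
      · refine ⟨n, ?_⟩
        rintro ℓ ⟨I', J', _, rfl⟩
        exact le_trans (Finset.card_le_univ I') (by simp)
      · exact ⟨I, J, htwin, rfl⟩
    have hFgen : maxTwinSize c0 = Fgen n 2 := hc0
    calc (n:ℝ)/4 - 1 ≤ (I.card : ℝ) := hbound
      _ ≤ ((maxTwinSize c0 : ℕ) : ℝ) := by exact_mod_cast hIle
      _ = ((Fgen n 2 : ℕ) : ℝ) := by rw [hFgen]
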